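/- Let Ω ⊆ ℝ^d be convex, g : Ω → ℝ twice differentiable with ρI ⪯ ∇²g ⪯ LI on Ω for 0 < ρ ≤ L, attaining its minimum at θ*_g ∈ Ω with B(θ*_g, r) ⊆ Ω. Let f : Ω → ℝ be differentiable with D₁ = sup_{θ∈Ω} ‖∇f(θ) - ∇g(θ)‖₂ ≤ ρr. Then f attains its infimum at some θ*_f ∈ Ω with ‖θ*_f - θ*_g‖₂ ≤ 2D₁/ρ, and f and g are (log 2, 3LD₁²/ρ²)-close. -/

import Mathlib

/-- `f` and `g` are `(ε,δ)`-close on the set `Ω`. -/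
def IsCloseOn {α : Type*} (f g : α → ℝ) (Ω : Set α) (ε δ : ℝ) : Prop :=
  ∀ θ ∈ Ω, g θ - sInf (g '' Ω) ≤ Real.exp ε * ((f θ - sInf (f '' Ω)) + δ) ∧
    f θ - sInf (f '' Ω) ≤ Real.exp ε * ((g θ - sInf (g '' Ω)) + δ)

open Set Metric in
private lemma sc_lower {d : ℕ} {Ω : Set (EuclideanSpace ℝ (Fin d))} (hΩ : Convex ℝ Ω)
    {g : EuclideanSpace ℝ (Fin d) → ℝ} (hg : ContDiff ℝ 2 g) {ρ : ℝ}
    (hess : ∀ θ ∈ Ω, ∀ v : EuclideanSpace ℝ (Fin d),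
      ρ * ‖v‖ ^ 2 ≤ iteratedFDeriv ℝ 2 g θ ![v, v])
    {x y : EuclideanSpace ℝ (Fin d)} (hx : x ∈ Ω) (hy : y ∈ Ω) :
    g x + fderiv ℝ g x (y - x) + ρ / 2 * ‖y - x‖ ^ 2 ≤ g y := by
  set v := y - x with hv
  have hg1 : Differentiable ℝ g := hg.differentiable (by norm_num)
  have hg2 : Differentiable ℝ (fderiv ℝ g) :=
    (hg.fderiv_right (m := 1) (by norm_num)).differentiable (by norm_num)
  have hγ : ∀ t : ℝ, HasDerivAt (fun s : ℝ => x + s • v) v t := by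
    intro t
    simpa using ((hasDerivAt_id t).smul_const v).const_add x
  have hmem : ∀ t ∈ Icc (0:ℝ) 1, x + t • v ∈ Ω := by
    intro t ht
    have h1 : x + t • v = (1 - t) • x + t • y := by rw [hv]; module
    rw [h1]
    exact hΩ hx hy (by linarith [ht.2]) ht.1 (by ring)
  set ψ : ℝ → ℝ := fun t => fderiv ℝ g (x + t • v) v with hψdef
  have hφ : ∀ t : ℝ, HasDerivAt (fun s => g (x + s • v)) (ψ t) t := fun t =>
    (hg1 _).hasFDerivAt.comp_hasDerivAt t (hγ t)
  have hψ : ∀ t : ℝ, HasDerivAt ψ (fderiv ℝ (fderiv ℝ g) (x + t • v) v v) t := by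
    intro t
    have h1 : HasDerivAt (fun s : ℝ => fderiv ℝ g (x + s • v))
        (fderiv ℝ (fderiv ℝ g) (x + t • v) v) t :=
      (hg2 _).hasFDerivAt.comp_hasDerivAt t (hγ t)
    simpa using h1.clm_apply (hasDerivAt_const t v)
  have hB : ∀ t ∈ Icc (0:ℝ) 1, ρ * ‖v‖ ^ 2 ≤ fderiv ℝ (fderiv ℝ g) (x + t • v) v v := by
    intro t ht
    have h := hess _ (hmem t ht) v
    rwa [iteratedFDeriv_two_apply, Matrix.cons_val_zero, Matrix.cons_val_one, Matrix.cons_val_zero]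
      at h
  set χ : ℝ → ℝ := fun t => g (x + t • v) - ψ 0 * t - ρ / 2 * ‖v‖ ^ 2 * t ^ 2 with hχdef
  set χ' : ℝ → ℝ := fun t => ψ t - ψ 0 - ρ * ‖v‖ ^ 2 * t with hχ'def
  have hχ : ∀ t : ℝ, HasDerivAt χ (χ' t) t := by
    intro t
    have h2 : HasDerivAt (fun t : ℝ => ψ 0 * t) (ψ 0) t := by
      simpa using (hasDerivAt_id t).const_mul (ψ 0)
    have h3 : HasDerivAt (fun t : ℝ => ρ / 2 * ‖v‖ ^ 2 * t ^ 2) (ρ * ‖v‖ ^ 2 * t) t := by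
      have := (hasDerivAt_pow 2 t).const_mul (ρ / 2 * ‖v‖ ^ 2)
      refine this.congr_deriv ?_
      push_cast
      ring
    exact ((hφ t).sub h2).sub h3
  have hχ'' : ∀ t : ℝ,
      HasDerivAt χ' (fderiv ℝ (fderiv ℝ g) (x + t • v) v v - ρ * ‖v‖ ^ 2) t := by
    intro t
    have h4 : HasDerivAt (fun t : ℝ => ψ 0 + ρ * ‖v‖ ^ 2 * t) (ρ * ‖v‖ ^ 2) t := by
      simpa using ((hasDerivAt_id t).const_mul (ρ * ‖v‖ ^ 2)).const_add (ψ 0)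
    have := (hψ t).sub h4
    have e : χ' = ψ - fun t => ψ 0 + ρ * ‖v‖ ^ 2 * t := by
      funext s; simp [hχ'def]; ring
    rw [e]; exact this
  have key : χ 0 ≤ χ 1 := by
    obtain ⟨c, hc, hc'⟩ := exists_hasDerivAt_eq_slope χ χ' one_pos
      (fun t _ => (hχ t).continuousAt.continuousWithinAt) (fun t _ => hχ t)
    obtain ⟨e, he, he'⟩ := exists_hasDerivAt_eq_slope χ'
      (fun t => fderiv ℝ (fderiv ℝ g) (x + t • v) v v - ρ * ‖v‖ ^ 2) hc.1
      (fun t _ => (hχ'' t).continuousAt.continuousWithinAt) (fun t _ => hχ'' t)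
    have heI : e ∈ Icc (0:ℝ) 1 := ⟨he.1.le, he.2.le.trans hc.2.le⟩
    have h1 := hB e heI
    have hχ'0 : χ' 0 = 0 := by simp [hχ'def]
    have hχ'c : 0 ≤ χ' c := by
      have hc0 : (0:ℝ) < c := hc.1
      rw [hχ'0, sub_zero, sub_zero] at he'
      have h2 : 0 ≤ χ' c / c := by rw [← he']; linarith
      calc (0:ℝ) ≤ (χ' c / c) * c := mul_nonneg h2 hc0.le
        _ = χ' c := div_mul_cancel₀ _ hc0.ne'
    rw [sub_zero, div_one] at hc'
    linarith [hc' ▸ hχ'c]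
  have hx0 : x + (0:ℝ) • v = x := by simp
  have hx1 : x + (1:ℝ) • v = y := by rw [hv]; module
  have e0 : χ 0 = g x := by simp [hχdef, hx0]
  have e1 : χ 1 = g y - fderiv ℝ g x (y - x) - ρ / 2 * ‖v‖ ^ 2 := by
    simp [hχdef, hψdef, hx1, hx0, hv]
  rw [e0, e1, ← hv] at key
  linarith

set_option maxHeartbeats 1000000 in
theorem isCloseOn_of_small_gradient_perturbation {d : ℕ}
    (Ω : Set (EuclideanSpace ℝ (Fin d))) (hΩ : Convex ℝ Ω)
    (g : EuclideanSpace ℝ (Fin d) → ℝ) (hg : ContDiff ℝ 2 g)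
    (ρ L : ℝ) (hρ : 0 < ρ) (hρL : ρ ≤ L)
    (hessg : ∀ θ ∈ Ω, ∀ v : EuclideanSpace ℝ (Fin d),
      ρ * ‖v‖ ^ 2 ≤ iteratedFDeriv ℝ 2 g θ ![v, v] ∧
        iteratedFDeriv ℝ 2 g θ ![v, v] ≤ L * ‖v‖ ^ 2)
    (θg : EuclideanSpace ℝ (Fin d)) (hθg : θg ∈ Ω) (hming : IsMinOn g Ω θg)
    (r : ℝ) (hr : 0 < r) (hball : Metric.closedBall θg r ⊆ Ω)
    (f : EuclideanSpace ℝ (Fin d) → ℝ)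
    (hf : ∀ θ ∈ Ω, DifferentiableAt ℝ f θ) (D₁ : ℝ)
    (hD : ∀ θ ∈ Ω, ‖gradient f θ - gradient g θ‖ ≤ D₁) (hD₁ : D₁ ≤ ρ * r) :
    ∃ θf ∈ Ω, IsMinOn f Ω θf ∧ ‖θf - θg‖ ≤ 2 * D₁ / ρ ∧
      IsCloseOn f g Ω (Real.log 2) (3 * L * D₁ ^ 2 / ρ ^ 2) := by
  have hg1 : Differentiable ℝ g := hg.differentiable (by norm_num)
  have hD₀ : 0 ≤ D₁ := le_trans (norm_nonneg _) (hD θg hθg)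
  have hΩnhds : Ω ∈ nhds θg :=
    Filter.mem_of_superset (Metric.closedBall_mem_nhds θg hr) hball
  have hgrad0 : fderiv ℝ g θg = 0 := (hming.isLocalMin hΩnhds).fderiv_eq_zero
  have hsc : ∀ x ∈ Ω, ∀ y ∈ Ω,
      g x + fderiv ℝ g x (y - x) + ρ / 2 * ‖y - x‖ ^ 2 ≤ g y :=
    fun x hx y hy => sc_lower hΩ hg (fun θ hθ v => (hessg θ hθ v).1) hx hy
  have hscg : ∀ y ∈ Ω, g θg + ρ / 2 * ‖y - θg‖ ^ 2 ≤ g y := by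
    intro y hy
    have h := hsc θg hθg y hy
    rw [hgrad0] at h
    simpa using h
  -- Lipschitz estimate for f - g
  have hlip : ∀ x ∈ Ω, ∀ y ∈ Ω, |(f x - g x) - (f y - g y)| ≤ D₁ * ‖x - y‖ := by
    intro x hx y hy
    have hbound : ∀ z ∈ Ω, ‖fderiv ℝ f z - fderiv ℝ g z‖ ≤ D₁ := by
      intro z hz
      have h := hD z hz
      rwa [gradient, gradient, ← map_sub, LinearIsometryEquiv.norm_map] at h
    have key := hΩ.norm_image_sub_le_of_norm_hasFDerivWithin_le
      (f := fun z => f z - g z) (f' := fun z => fderiv ℝ f z - fderiv ℝ g z)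
      (fun z hz => ((hf z hz).hasFDerivAt.sub (hg1 z).hasFDerivAt).hasFDerivWithinAt)
      hbound hy hx
    simpa [Real.norm_eq_abs] using key
  -- existence of a minimizer on the closed ball
  have hcont : ContinuousOn f (Metric.closedBall θg r) := fun z hz =>
    ((hf z (hball hz)).continuousAt).continuousWithinAt
  obtain ⟨θf, hθfK, hminK⟩ := (isCompact_closedBall θg r).exists_isMinOn
    ⟨θg, Metric.mem_closedBall_self hr.le⟩ hcont
  have hθfΩ : θf ∈ Ω := hball hθfK
  -- θf is a global minimizer on Ω
  have hminΩ : IsMinOn f Ω θf := by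
    intro θ hθ
    by_cases hcase : ‖θ - θg‖ ≤ r
    · exact hminK (by simpa [Metric.mem_closedBall, dist_eq_norm] using hcase)
    · push_neg at hcase
      set s := ‖θ - θg‖ with hs
      have hs0 : 0 < s := lt_trans hr hcase
      set θ' := θg + (r / s) • (θ - θg) with hθ'def
      have hrs1 : r / s ≤ 1 := by rw [div_le_one hs0]; exact hcase.le
      have hrs0 : 0 ≤ r / s := by positivity
      have hθ'Ω : θ' ∈ Ω := by
        have he : θ' = (1 - r / s) • θg + (r / s) • θ := by rw [hθ'def]; module
        rw [he]
        exact hΩ hθg hθ (by linarith) hrs0 (by ring)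
      have hd1 : θ' - θg = (r / s) • (θ - θg) := by rw [hθ'def]; module
      have hd2 : θ - θ' = (1 - r / s) • (θ - θg) := by rw [hθ'def]; module
      have hn1 : ‖θ' - θg‖ = r := by
        rw [hd1, norm_smul, Real.norm_eq_abs, abs_of_nonneg hrs0, ← hs]
        field_simp
      have hn2 : ‖θ - θ'‖ = s - r := by
        rw [hd2, norm_smul, Real.norm_eq_abs, abs_of_nonneg (by linarith), ← hs]
        field_simp
      have hθ'K : θ' ∈ Metric.closedBall θg r := by
        rw [Metric.mem_closedBall, dist_eq_norm, hn1]
      -- gradient monotonicity between θg and θ'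
      set A := fderiv ℝ g θ' (θ - θg) with hA
      have hm1 := hsc θg hθg θ' hθ'Ω
      have hm2 := hsc θ' hθ'Ω θg hθg
      rw [hgrad0] at hm1
      have hval1 : fderiv ℝ g θ' (θg - θ') = -((r / s) * A) := by
        have : θg - θ' = -((r / s) • (θ - θg)) := by rw [hθ'def]; module
        rw [this, map_neg, map_smul, smul_eq_mul]
      have hAbound : ρ * r * s ≤ A := by
        have hnorm : ‖θg - θ'‖ = r := by rw [norm_sub_rev, hn1]
        rw [hval1, hnorm] at hm2
        rw [hn1] at hm1
        simp only [ContinuousLinearMap.zero_apply] at hm1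
        -- from hm1 + hm2 : (r/s) * A ≥ ρ * r^2
        have h4 : ρ * r ^ 2 ≤ (r / s) * A := by linarith
        rw [div_mul_eq_mul_div, le_div_iff₀ hs0] at h4
        nlinarith [hs0, hr]
      have hval2 : fderiv ℝ g θ' (θ - θ') = (1 - r / s) * A := by
        rw [hd2, map_smul, smul_eq_mul]
      have hsc3 := hsc θ' hθ'Ω θ hθ
      rw [hval2, hn2] at hsc3
      have hlip3 := (abs_le.1 (hlip θ hθ θ' hθ'Ω)).1
      rw [hn2] at hlip3
      have hfrac : (1 - r / s) * A ≥ ρ * r * (s - r) := by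
        have h5 : (1 - r / s) = (s - r) / s := by field_simp
        rw [h5, div_mul_eq_mul_div, ge_iff_le, le_div_iff₀ hs0]
        have h6 := mul_le_mul_of_nonneg_left hAbound (show (0:ℝ) ≤ s - r by linarith)
        calc ρ * r * (s - r) * s = (s - r) * (ρ * r * s) := by ring
          _ ≤ (s - r) * A := h6
      have hDs : D₁ * (s - r) ≤ ρ * r * (s - r) :=
        mul_le_mul_of_nonneg_right hD₁ (by linarith)
      have : f θ' ≤ f θ := by
        have hsq : 0 ≤ ρ * (s - r) ^ 2 := mul_nonneg hρ.le (sq_nonneg _)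
        linarith [hsc3, hlip3, hfrac, hDs]
      exact le_trans (hminK hθ'K) this
  -- distance bound
  have htf : ‖θf - θg‖ ≤ 2 * D₁ / ρ := by
    have h1 : f θf ≤ f θg := hminK (Metric.mem_closedBall_self hr.le)
    have h2 := hscg θf hθfΩ
    have h3 := (abs_le.1 (hlip θf hθfΩ θg hθg)).1
    set t := ‖θf - θg‖ with ht
    have ht0 : 0 ≤ t := norm_nonneg _
    rw [le_div_iff₀ hρ]
    nlinarith [ht0]
  -- infima
  have hfInf : sInf (f '' Ω) = f θf :=
    IsLeast.csInf_eq ⟨⟨θf, hθfΩ, rfl⟩, by rintro _ ⟨z, hz, rfl⟩; exact hminΩ hz⟩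
  have hgInf : sInf (g '' Ω) = g θg :=
    IsLeast.csInf_eq ⟨⟨θg, hθg, rfl⟩, by rintro _ ⟨z, hz, rfl⟩; exact hming hz⟩
  refine ⟨θf, hθfΩ, hminΩ, htf, ?_⟩
  intro θ hθ
  rw [hfInf, hgInf, Real.exp_log two_pos]
  have ht0 : 0 ≤ ‖θ - θg‖ := norm_nonneg _
  have ha : ρ / 2 * ‖θ - θg‖ ^ 2 ≤ g θ - g θg := by have := hscg θ hθ; linarith
  have ha0 : 0 ≤ g θ - g θg := le_trans (by positivity) ha
  have hb0 : 0 ≤ f θ - f θf := sub_nonneg.2 (hminΩ hθ)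
  have hl1 := abs_le.1 (hlip θ hθ θg hθg)
  have hl2 := abs_le.1 (hlip θg hθg θf hθfΩ)
  have htf' : ‖θg - θf‖ ≤ 2 * D₁ / ρ := by rwa [norm_sub_rev]
  have hAM : D₁ * ‖θ - θg‖ ≤ (g θ - g θg) / 2 + D₁ ^ 2 / ρ := by
    have key : ρ * (D₁ * ‖θ - θg‖) ≤ ρ * ((g θ - g θg) / 2 + D₁ ^ 2 / ρ) := by
      have hDρ : ρ * (D₁ ^ 2 / ρ) = D₁ ^ 2 := by field_simp
      nlinarith [sq_nonneg (ρ * ‖θ - θg‖ - 2 * D₁), mul_le_mul_of_nonneg_left ha hρ.le]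
    exact le_of_mul_le_mul_left key hρ
  have hq : D₁ ^ 2 / ρ ≤ L * D₁ ^ 2 / ρ ^ 2 := by
    rw [div_le_div_iff₀ hρ (pow_pos hρ 2)]
    nlinarith [mul_nonneg (mul_nonneg (sub_nonneg.2 hρL) (sq_nonneg D₁)) hρ.le]
  have hq0 : 0 ≤ L * D₁ ^ 2 / ρ ^ 2 := le_trans (by positivity) hq
  have hlip2 : D₁ * ‖θg - θf‖ ≤ 2 * (D₁ ^ 2 / ρ) := by
    have := mul_le_mul_of_nonneg_left htf' hD₀
    calc D₁ * ‖θg - θf‖ ≤ D₁ * (2 * D₁ / ρ) := this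
      _ = 2 * (D₁ ^ 2 / ρ) := by ring
  have hgθf : g θg ≤ g θf := hming hθfΩ
  have hre : 3 * L * D₁ ^ 2 / ρ ^ 2 = 3 * (L * D₁ ^ 2 / ρ ^ 2) := by ring
  rw [hre]
  have hfθg : f θf ≤ f θg := hminΩ hθg
  constructor
  · -- g side ≤ 2 * (f side + δ)
    linarith [hl1.1, hAM, hq, hq0]
  · linarith [hl1.2, hl2.2, hAM, hq, hq0, hlip2, ha0]
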